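/- Let d ≥ 3 be an integer and let t > 2. Then ∫₁^{t−1} |t−s|^{−d/2} s^{−d/2} t^{d/2} ds ≤ 2^{2+d/2}/(d−2). -/

import Mathlib

lemma div_le_div_of_nonneg_right_aux {x c : ℝ} (hx : 0 ≤ x) (hc : 0 < c) :
    (1 - x) / c ≤ 1 / c := by
  gcongr
  linarith

open intervalIntegral in
lemma aux_rpow_int (p a : ℝ) (hp : 1 < p) (ha : 1 ≤ a) :
    (∫ s in (1:ℝ)..a, s ^ (-p)) ≤ 1 / (p - 1) := by
  have h0 : (0:ℝ) ∉ Set.uIcc 1 a := by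
    rw [Set.uIcc_of_le ha]
    intro h
    exact absurd h.1 (by norm_num)
  rw [integral_rpow (Or.inr ⟨by intro h; rw [neg_eq_iff_eq_neg] at h; norm_num at h; linarith, h0⟩)]
  have h1 : (1:ℝ) ^ (-p + 1) = 1 := Real.one_rpow _
  have h2 : 0 ≤ a ^ (-p + 1) := Real.rpow_nonneg (by linarith) _
  rw [h1]
  have hne : -p + 1 < 0 := by linarith
  rw [show (-p + 1) = -(p - 1) by ring] at h2 ⊢
  rw [div_neg, ← neg_div, neg_sub]
  exact div_le_div_of_nonneg_right_aux h2 (by linarith)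

theorem stmt_4 (d : ℕ) (hd : 3 ≤ d) (t : ℝ) (ht : 2 < t) :
    (∫ s in (1:ℝ)..(t - 1),
        |t - s| ^ (-((d : ℝ) / 2)) * s ^ (-((d : ℝ) / 2)) * t ^ ((d : ℝ) / 2))
      ≤ 2 ^ (2 + (d : ℝ) / 2) / ((d : ℝ) - 2) := by
  have hd3 : (3:ℝ) ≤ (d:ℝ) := by exact_mod_cast hd
  set p : ℝ := (d : ℝ) / 2 with hp_def
  have hp1 : 1 < p := by rw [hp_def]; linarith
  have ht0 : 0 < t := by linarith
  have h12 : (1:ℝ) ≤ t / 2 := by linarith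
  have h2t : t / 2 ≤ t - 1 := by linarith
  set f : ℝ → ℝ := fun s => |t - s| ^ (-p) * s ^ (-p) * t ^ p with hf_def
  -- continuity of f on [1, t-1]
  have hcont : ContinuousOn f (Set.Icc 1 (t - 1)) := by
    apply ContinuousOn.mul _ continuousOn_const
    apply ContinuousOn.mul
    · apply ContinuousOn.rpow_const
      · exact (continuousOn_const.sub continuousOn_id).abs
      · intro x hx
        left
        have : 1 ≤ t - x := by linarith [hx.2]
        rw [abs_ne_zero]
        intro h; rw [h] at this; linarith
    · apply ContinuousOn.rpow_const continuousOn_id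
      intro x hx
      left
      have h1x : (1:ℝ) ≤ x := hx.1
      intro h; simp only [id_eq] at h; rw [h] at h1x; linarith
  have hsub1 : Set.uIcc (1:ℝ) (t/2) ⊆ Set.Icc 1 (t - 1) := by
    rw [Set.uIcc_of_le h12]; exact Set.Icc_subset_Icc le_rfl h2t
  have hsub2 : Set.uIcc (t/2) (t - 1) ⊆ Set.Icc 1 (t - 1) := by
    rw [Set.uIcc_of_le h2t]; exact Set.Icc_subset_Icc h12 le_rfl
  have hint1 : IntervalIntegrable f MeasureTheory.volume 1 (t/2) :=
    (hcont.mono hsub1).intervalIntegrable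
  have hint2 : IntervalIntegrable f MeasureTheory.volume (t/2) (t - 1) :=
    (hcont.mono hsub2).intervalIntegrable
  -- the bounding functions
  set g1 : ℝ → ℝ := fun s => 2 ^ p * s ^ (-p) with hg1_def
  set g2 : ℝ → ℝ := fun s => 2 ^ p * (t - s) ^ (-p) with hg2_def
  have hg1int : IntervalIntegrable g1 MeasureTheory.volume 1 (t/2) := by
    apply ContinuousOn.intervalIntegrable
    apply ContinuousOn.mul continuousOn_const
    apply ContinuousOn.rpow_const continuousOn_id
    intro x hx
    left
    have hx1 : (1:ℝ) ≤ x := by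
      have := hsub1 hx; exact this.1
    intro h; simp only [id_eq] at h; rw [h] at hx1; linarith
  have hg2int : IntervalIntegrable g2 MeasureTheory.volume (t/2) (t - 1) := by
    apply ContinuousOn.intervalIntegrable
    apply ContinuousOn.mul continuousOn_const
    apply ContinuousOn.rpow_const (continuousOn_const.sub continuousOn_id)
    intro x hx
    left
    have hx1 : x ≤ t - 1 := (hsub2 hx).2
    have h1x : 1 ≤ t - x := by linarith
    intro h; simp only [Pi.sub_apply, id_eq] at h; rw [h] at h1x; linarith
  -- pointwise bounds
  have hb1 : ∀ s ∈ Set.Icc (1:ℝ) (t/2), f s ≤ g1 s := by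
    intro s hs
    have hs1 : (1:ℝ) ≤ s := hs.1
    have hs2 : s ≤ t / 2 := hs.2
    have hts : t / 2 ≤ t - s := by linarith
    have ht2 : (0:ℝ) < t / 2 := by linarith
    have habs : |t - s| = t - s := abs_of_pos (by linarith)
    have key : |t - s| ^ (-p) ≤ (t/2) ^ (-p) := by
      rw [habs]
      exact Real.rpow_le_rpow_of_nonpos ht2 hts (by linarith)
    have htp : (t/2) ^ (-p) * t ^ p = 2 ^ p := by
      have htpp : (0:ℝ) < t ^ p := Real.rpow_pos_of_pos ht0 _
      have h2pp : (0:ℝ) < (2:ℝ) ^ p := Real.rpow_pos_of_pos (by norm_num) _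
      rw [Real.rpow_neg ht2.le, Real.div_rpow ht0.le (by norm_num)]
      field_simp
    calc f s = |t - s| ^ (-p) * s ^ (-p) * t ^ p := rfl
      _ ≤ (t/2) ^ (-p) * s ^ (-p) * t ^ p := by
          apply mul_le_mul_of_nonneg_right _ (Real.rpow_nonneg ht0.le _)
          exact mul_le_mul_of_nonneg_right key (Real.rpow_nonneg (by linarith) _)
      _ = ((t/2) ^ (-p) * t ^ p) * s ^ (-p) := by ring
      _ = 2 ^ p * s ^ (-p) := by rw [htp]
      _ = g1 s := rfl
  have hb2 : ∀ s ∈ Set.Icc (t/2) (t - 1), f s ≤ g2 s := by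
    intro s hs
    have hs1 : t / 2 ≤ s := hs.1
    have hs2 : s ≤ t - 1 := hs.2
    have ht2 : (0:ℝ) < t / 2 := by linarith
    have habs : |t - s| = t - s := abs_of_pos (by linarith)
    have key : s ^ (-p) ≤ (t/2) ^ (-p) :=
      Real.rpow_le_rpow_of_nonpos ht2 hs1 (by linarith)
    have htp : (t/2) ^ (-p) * t ^ p = 2 ^ p := by
      have htpp : (0:ℝ) < t ^ p := Real.rpow_pos_of_pos ht0 _
      have h2pp : (0:ℝ) < (2:ℝ) ^ p := Real.rpow_pos_of_pos (by norm_num) _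
      rw [Real.rpow_neg ht2.le, Real.div_rpow ht0.le (by norm_num)]
      field_simp
    calc f s = |t - s| ^ (-p) * s ^ (-p) * t ^ p := rfl
      _ ≤ |t - s| ^ (-p) * (t/2) ^ (-p) * t ^ p := by
          apply mul_le_mul_of_nonneg_right _ (Real.rpow_nonneg ht0.le _)
          exact mul_le_mul_of_nonneg_left key (Real.rpow_nonneg (abs_nonneg _) _)
      _ = ((t/2) ^ (-p) * t ^ p) * |t - s| ^ (-p) := by ring
      _ = 2 ^ p * (t - s) ^ (-p) := by rw [htp, habs]
      _ = g2 s := rfl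
  -- split the integral
  have hsplit : (∫ s in (1:ℝ)..(t - 1), f s)
      = (∫ s in (1:ℝ)..(t/2), f s) + ∫ s in (t/2)..(t - 1), f s :=
    (intervalIntegral.integral_add_adjacent_intervals hint1 hint2).symm
  have hI1 : (∫ s in (1:ℝ)..(t/2), f s) ≤ 2 ^ p * (1 / (p - 1)) := by
    calc (∫ s in (1:ℝ)..(t/2), f s) ≤ ∫ s in (1:ℝ)..(t/2), g1 s :=
          intervalIntegral.integral_mono_on h12 hint1 hg1int hb1
      _ = 2 ^ p * ∫ s in (1:ℝ)..(t/2), s ^ (-p) := by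
          rw [hg1_def]; exact intervalIntegral.integral_const_mul _ _
      _ ≤ 2 ^ p * (1 / (p - 1)) := by
          apply mul_le_mul_of_nonneg_left (aux_rpow_int p (t/2) hp1 h12)
          exact Real.rpow_nonneg (by norm_num) _
  have hI2 : (∫ s in (t/2)..(t - 1), f s) ≤ 2 ^ p * (1 / (p - 1)) := by
    calc (∫ s in (t/2)..(t - 1), f s) ≤ ∫ s in (t/2)..(t - 1), g2 s :=
          intervalIntegral.integral_mono_on h2t hint2 hg2int hb2
      _ = 2 ^ p * ∫ s in (t/2)..(t - 1), (t - s) ^ (-p) := by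
          rw [hg2_def]; exact intervalIntegral.integral_const_mul _ _
      _ = 2 ^ p * ∫ u in (1:ℝ)..(t/2), u ^ (-p) := by
          congr 1
          have := intervalIntegral.integral_comp_sub_left (a := t/2) (b := t - 1)
            (fun u : ℝ => u ^ (-p)) t
          simpa [show t - (t - 1) = 1 by ring, show t - t/2 = t/2 by ring] using this
      _ ≤ 2 ^ p * (1 / (p - 1)) := by
          apply mul_le_mul_of_nonneg_left (aux_rpow_int p (t/2) hp1 h12)
          exact Real.rpow_nonneg (by norm_num) _
  have hrhs : (2:ℝ) ^ (2 + p) / ((d:ℝ) - 2) = 2 ^ p * (1 / (p - 1)) + 2 ^ p * (1 / (p - 1)) := by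
    have h4 : (2:ℝ) ^ (2:ℝ) = 4 := by
      have h := Real.rpow_natCast (2:ℝ) 2
      simp only [Nat.cast_ofNat] at h
      rw [h]; norm_num
    have h2p : (2:ℝ) ^ (2 + p) = 4 * 2 ^ p := by
      rw [Real.rpow_add (by norm_num : (0:ℝ) < 2), h4]
    have hdp : (d:ℝ) - 2 = 2 * (p - 1) := by rw [hp_def]; ring
    rw [h2p, hdp]
    have hpm : p - 1 ≠ 0 := by linarith
    field_simp
    ring
  show (∫ s in (1:ℝ)..(t - 1), f s) ≤ 2 ^ (2 + p) / ((d:ℝ) - 2)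
  rw [hsplit, hrhs]
  exact add_le_add hI1 hI2
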